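/- arXiv:2011.10022 — 5 statements merged into one kernel-verified Lean document; each statement's English description precedes it below -/
import Mathlib

section
/- Let 0 = s₀ < s₁ < … < s_k < s_{k+1} = T and let f_j : ℝⁿ × [0,T] → ℝⁿ for 0 ≤ j ≤ k. Define F(χ, t) = f_j(χ, t) for t ∈ (s_j, s_{j+1}). Suppose x : [0, T] → ℝⁿ is Lipschitz continuous with x(0) = x₀ and ẋ(t) = F(x(t), t) for almost every t ∈ [0, T]. Assume there exist ρ > 0 and L ≥ 0, independent of j, such that each f_j(χ, t) is continuous in (χ, t) and Lipschitz continuous in χ with constant L on the tube {(χ, t) : t ∈ [s_j, s_{j+1}], ‖χ − x(t)‖ ≤ ρ}. Then for any y₀ ∈ ℝⁿ with e^{LT}·‖x₀ − y₀‖ ≤ ρ, there exists a Lipschitz continuous y : [0, T] → ℝⁿ with y(0) = y₀ and ẏ(t) = F(y(t), t) for almost every t ∈ [0, T], and this solution satisfies ‖y(t) − x(t)‖ ≤ e^{L t}·‖y₀ − x₀‖ for all t ∈ [0, T]. -/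
open MeasureTheory


open MeasureTheory Set

noncomputable section StmtAux

variable {E : Type*} [NormedAddCommGroup E] [NormedSpace ℝ E]

/-- Radial retraction onto the closed ball of radius `r` centered at the origin. -/
def stmt2ProjB (r : ℝ) (a : E) : E := if ‖a‖ ≤ r then a else (r / ‖a‖) • a

lemma stmt2ProjB_eq {r : ℝ} {a : E} (h : ‖a‖ ≤ r) : stmt2ProjB r a = a := if_pos h

lemma stmt2ProjB_norm_le {r : ℝ} (hr : 0 ≤ r) (a : E) : ‖stmt2ProjB r a‖ ≤ r := by
  unfold stmt2ProjB
  split_ifs with h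
  · exact h
  · push_neg at h
    have ha : 0 < ‖a‖ := lt_of_le_of_lt hr h
    rw [norm_smul, Real.norm_eq_abs, abs_of_nonneg (div_nonneg hr ha.le),
      div_mul_cancel₀ _ ha.ne']

lemma stmt2ProjB_norm_le_self {r : ℝ} (hr : 0 ≤ r) (a : E) : ‖stmt2ProjB r a‖ ≤ ‖a‖ := by
  unfold stmt2ProjB
  split_ifs with h
  · exact le_rfl
  · push_neg at h
    have ha : 0 < ‖a‖ := lt_of_le_of_lt hr h
    rw [norm_smul, Real.norm_eq_abs, abs_of_nonneg (div_nonneg hr ha.le),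
      div_mul_cancel₀ _ ha.ne']
    exact h.le

lemma stmt2ProjB_lip_aux {r : ℝ} (hr : 0 ≤ r) {a b : E} (ha : ‖a‖ ≤ r) (hb : r < ‖b‖) :
    ‖stmt2ProjB r a - stmt2ProjB r b‖ ≤ 2 * ‖a - b‖ := by
  have hb0 : 0 < ‖b‖ := lt_of_le_of_lt hr hb
  rw [stmt2ProjB_eq ha, stmt2ProjB, if_neg (not_le.2 hb)]
  have key : a - (r / ‖b‖) • b = (a - b) + (1 - r / ‖b‖) • b := by
    rw [sub_smul, one_smul]; abel
  have h1 : ‖(1 - r / ‖b‖) • b‖ = ‖b‖ - r := by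
    rw [norm_smul, Real.norm_eq_abs, abs_of_nonneg, sub_mul, one_mul,
      div_mul_cancel₀ _ hb0.ne']
    rw [sub_nonneg, div_le_one hb0]
    exact hb.le
  have h2 : ‖b‖ - ‖a‖ ≤ ‖a - b‖ := by
    have := norm_sub_norm_le b a
    rwa [norm_sub_rev] at this
  calc ‖a - (r / ‖b‖) • b‖ ≤ ‖a - b‖ + ‖(1 - r / ‖b‖) • b‖ := by rw [key]; exact norm_add_le _ _
    _ = ‖a - b‖ + (‖b‖ - r) := by rw [h1]
    _ ≤ ‖a - b‖ + (‖b‖ - ‖a‖) := by linarith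
    _ ≤ 2 * ‖a - b‖ := by linarith

lemma stmt2ProjB_lip {r : ℝ} (hr : 0 ≤ r) (a b : E) :
    ‖stmt2ProjB r a - stmt2ProjB r b‖ ≤ 2 * ‖a - b‖ := by
  rcases le_or_gt ‖a‖ r with ha | ha <;> rcases le_or_gt ‖b‖ r with hb | hb
  · rw [stmt2ProjB_eq ha, stmt2ProjB_eq hb]
    have := norm_nonneg (a - b); linarith
  · exact stmt2ProjB_lip_aux hr ha hb
  · rw [norm_sub_rev, norm_sub_rev a b]
    exact stmt2ProjB_lip_aux hr hb ha
  · have ha0 : 0 < ‖a‖ := lt_of_le_of_lt hr ha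
    have hb0 : 0 < ‖b‖ := lt_of_le_of_lt hr hb
    rw [stmt2ProjB, stmt2ProjB, if_neg (not_le.2 ha), if_neg (not_le.2 hb)]
    have key : (r / ‖a‖) • a - (r / ‖b‖) • b
        = (r / ‖a‖) • (a - b) + (r / ‖a‖ - r / ‖b‖) • b := by
      rw [smul_sub, sub_smul]; abel
    have hm : |‖b‖ - ‖a‖| ≤ ‖a - b‖ := by
      rw [abs_sub_comm]
      exact abs_norm_sub_norm_le a b
    have h1 : ‖(r / ‖a‖) • (a - b)‖ ≤ ‖a - b‖ := by
      rw [norm_smul, Real.norm_eq_abs, abs_of_nonneg (div_nonneg hr ha0.le)]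
      have : r / ‖a‖ ≤ 1 := (div_le_one ha0).2 ha.le
      nlinarith [norm_nonneg (a - b)]
    have h2 : ‖(r / ‖a‖ - r / ‖b‖) • b‖ ≤ ‖a - b‖ := by
      rw [norm_smul, Real.norm_eq_abs]
      have hkey : r / ‖a‖ - r / ‖b‖ = r * (‖b‖ - ‖a‖) / (‖a‖ * ‖b‖) := by
        field_simp
      rw [hkey, abs_div, abs_mul, abs_of_nonneg hr, abs_of_nonneg (by positivity : (0:ℝ) ≤ ‖a‖ * ‖b‖)]
      have hstep : r * |‖b‖ - ‖a‖| / ‖a‖ ≤ |‖b‖ - ‖a‖| := by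
        rw [div_le_iff₀ ha0]
        nlinarith [abs_nonneg (‖b‖ - ‖a‖)]
      calc r * |‖b‖ - ‖a‖| / (‖a‖ * ‖b‖) * ‖b‖ = r * |‖b‖ - ‖a‖| / ‖a‖ := by
            field_simp
        _ ≤ |‖b‖ - ‖a‖| := hstep
        _ ≤ ‖a - b‖ := hm
    calc ‖(r / ‖a‖) • a - (r / ‖b‖) • b‖
        ≤ ‖(r / ‖a‖) • (a - b)‖ + ‖(r / ‖a‖ - r / ‖b‖) • b‖ := by
          rw [key]; exact norm_add_le _ _
      _ ≤ ‖a - b‖ + ‖a - b‖ := add_le_add h1 h2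
      _ = 2 * ‖a - b‖ := by ring

end StmtAux


open MeasureTheory Set

section StmtAux2

variable {E : Type*} [NormedAddCommGroup E] [NormedSpace ℝ E]

/-- Global Picard–Lindelöf on a compact interval: bounded, Lipschitz vector field. -/
lemma stmt2_exists_sol [CompleteSpace E] (v : ℝ → E → E) (a b : ℝ) (hab : a ≤ b)
    (K : NNReal) (C : ℝ) (hC : 0 ≤ C)
    (hlip : ∀ t ∈ Icc a b, LipschitzWith K (v t))
    (hcont : ∀ z : E, ContinuousOn (fun t => v t z) (Icc a b))
    (hbound : ∀ t ∈ Icc a b, ∀ z : E, ‖v t z‖ ≤ C) (z₀ : E) :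
    ∃ z : ℝ → E, z a = z₀ ∧ ∀ t ∈ Icc a b, HasDerivWithinAt z (v t (z t)) (Icc a b) t := by
  have hpl : IsPicardLindelof v (tmin := a) (tmax := b) ⟨a, le_rfl, hab⟩ z₀
      (C * (b - a)).toNNReal 0 C.toNNReal K :=
    { lipschitzOnWith := fun t ht => (hlip t ht).lipschitzOnWith
      continuousOn := fun z _ => hcont z
      norm_le := fun t ht z _ => by rw [Real.coe_toNNReal _ hC]; exact hbound t ht z
      mul_max_le := by
        simp only [NNReal.coe_zero, sub_zero, sub_self]
        rw [max_eq_left (sub_nonneg.2 hab), Real.coe_toNNReal _ hC,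
          Real.coe_toNNReal _ (mul_nonneg hC (sub_nonneg.2 hab))] }
  exact hpl.exists_eq_forall_mem_Icc_hasDerivWithinAt₀

/-- Grönwall-type estimate for a solution bounded by a linear growth field. -/
lemma stmt2_gron {f g : ℝ → E} {a b L' δ : ℝ}
    (hderiv : ∀ t ∈ Icc a b, HasDerivWithinAt f (g t) (Icc a b) t)
    (hbound : ∀ t ∈ Icc a b, ‖g t‖ ≤ L' * ‖f t‖)
    (ha : ‖f a‖ ≤ δ) : ∀ t ∈ Icc a b, ‖f t‖ ≤ δ * Real.exp (L' * (t - a)) := by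
  intro t ht
  have hcont : ContinuousOn f (Icc a b) := fun u hu => (hderiv u hu).continuousWithinAt
  have h := norm_le_gronwallBound_of_norm_deriv_right_le (K := L') (ε := 0) hcont
    (fun u hu => (hderiv u (Ico_subset_Icc_self hu)).mono_of_mem_nhdsWithin
      (Icc_mem_nhdsGE_of_mem hu))
    ha (fun u hu => by
      have := hbound u (Ico_subset_Icc_self hu)
      linarith) t ht
  rwa [gronwallBound_ε0] at h

/-- Lipschitz bound on `Icc` from a bound on the derivative. -/
lemma stmt2_lipOn_of_deriv {f g : ℝ → E} {a b C : ℝ} (hC : 0 ≤ C)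
    (hderiv : ∀ t ∈ Icc a b, HasDerivWithinAt f (g t) (Icc a b) t)
    (hbound : ∀ t ∈ Icc a b, ‖g t‖ ≤ C) :
    LipschitzOnWith C.toNNReal f (Icc a b) := by
  apply LipschitzOnWith.of_dist_le_mul
  intro u hu w hw
  wlog huw : u ≤ w generalizing u w
  · rw [dist_comm (f u), dist_comm u]
    exact this w hw u hu (le_of_not_ge huw)
  have hsub : Icc u b ⊆ Icc a b := Icc_subset_Icc hu.1 le_rfl
  have h := norm_image_sub_le_of_norm_deriv_le_segment'
    (f' := g) (fun t ht => (hderiv t (hsub ht)).mono hsub)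
    (fun t ht => hbound t (hsub (Ico_subset_Icc_self ht))) w ⟨huw, hw.2⟩
  rw [dist_eq_norm, dist_eq_norm, Real.coe_toNNReal _ hC, norm_sub_rev,
    Real.norm_eq_abs, abs_of_nonpos (by linarith), neg_sub]
  exact h

lemma stmt2_lipOn_congr {α β : Type*} [PseudoEMetricSpace α] [PseudoEMetricSpace β]
    {K : NNReal} {f g : α → β} {s : Set α}
    (h : LipschitzOnWith K f s) (hfg : ∀ u ∈ s, g u = f u) : LipschitzOnWith K g s :=
  fun u hu w hw => by rw [hfg u hu, hfg w hw]; exact h hu hw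

lemma stmt2_lipOn_glue {K : NNReal} {f : ℝ → E} {a b c : ℝ} (hab : a ≤ b) (hbc : b ≤ c)
    (h1 : LipschitzOnWith K f (Icc a b)) (h2 : LipschitzOnWith K f (Icc b c)) :
    LipschitzOnWith K f (Icc a c) := by
  apply LipschitzOnWith.of_dist_le_mul
  intro u hu w hw
  wlog huw : u ≤ w generalizing u w
  · rw [dist_comm (f u), dist_comm u]
    exact this w hw u hu (le_of_not_ge huw)
  by_cases h : w ≤ b
  · exact h1.dist_le_mul u ⟨hu.1, huw.trans h⟩ w ⟨hu.1.trans huw, h⟩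
  · by_cases h' : b ≤ u
    · exact h2.dist_le_mul u ⟨h', hu.2⟩ w ⟨h'.trans huw, hw.2⟩
    · push_neg at h h'
      have d1 := h1.dist_le_mul u ⟨hu.1, h'.le⟩ b ⟨hab, le_rfl⟩
      have d2 := h2.dist_le_mul b ⟨le_rfl, hbc⟩ w ⟨h.le, hw.2⟩
      rw [Real.dist_eq, abs_of_nonpos (by linarith), neg_sub] at d1 d2
      rw [Real.dist_eq, abs_of_nonpos (by linarith), neg_sub]
      calc dist (f u) (f w) ≤ dist (f u) (f b) + dist (f b) (f w) := dist_triangle _ _ _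
        _ ≤ K * (b - u) + K * (w - b) := add_le_add d1 d2
        _ = K * (w - u) := by ring

lemma stmt2_lipOn_add {K₁ K₂ : NNReal} {f g : ℝ → E} {s : Set ℝ}
    (hf : LipschitzOnWith K₁ f s) (hg : LipschitzOnWith K₂ g s) :
    LipschitzOnWith (K₁ + K₂) (fun t => f t + g t) s := by
  apply LipschitzOnWith.of_dist_le_mul
  intro u hu w hw
  have h1 := hf.dist_le_mul u hu w hw
  have h2 := hg.dist_le_mul u hu w hw
  calc dist (f u + g u) (f w + g w) ≤ dist (f u) (f w) + dist (g u) (g w) :=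
        dist_add_add_le _ _ _ _
    _ ≤ K₁ * dist u w + K₂ * dist u w := add_le_add h1 h2
    _ = (K₁ + K₂ : NNReal) * dist u w := by push_cast; ring

end StmtAux2

/-- Stability of the piecewise dynamics `ẋ = F(x, t)`, where
`F(χ, t) = f_j(χ, t)` on `(s_j, s_{j+1})`, with respect to the initial condition:
if each `f_j` is continuous and `L`-Lipschitz in `χ` on a `ρ`-tube around a solution `x`
with `x(0) = x₀`, then for every `y₀` with `e^{LT}‖x₀ − y₀‖ ≤ ρ` there is a solution `y`
with `y(0) = y₀` of the same dynamics, and `‖y(t) − x(t)‖ ≤ e^{Lt}‖y₀ − x₀‖` on `[0, T]`. -/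
theorem stmt_2 {n : ℕ} (k : ℕ) (T : ℝ) (s : ℕ → ℝ)
    (hs0 : s 0 = 0) (hsT : s (k + 1) = T) (hs : ∀ i ≤ k, s i < s (i + 1))
    (f : ℕ → EuclideanSpace ℝ (Fin n) → ℝ → EuclideanSpace ℝ (Fin n))
    (x : ℝ → EuclideanSpace ℝ (Fin n)) (x₀ : EuclideanSpace ℝ (Fin n))
    (Kx : NNReal) (hxlip : LipschitzOnWith Kx x (Set.Icc 0 T)) (hx0 : x 0 = x₀)
    (hxode : ∀ᵐ t ∂(volume.restrict (Set.Icc 0 T)),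
      ∀ j ≤ k, t ∈ Set.Ioo (s j) (s (j + 1)) → HasDerivAt x (f j (x t) t) t)
    (ρ L : ℝ) (hρ : 0 < ρ) (hL : 0 ≤ L)
    (hfcont : ∀ j ≤ k,
      ContinuousOn (fun q : EuclideanSpace ℝ (Fin n) × ℝ => f j q.1 q.2)
        {q : EuclideanSpace ℝ (Fin n) × ℝ |
          q.2 ∈ Set.Icc (s j) (s (j + 1)) ∧ ‖q.1 - x q.2‖ ≤ ρ})
    (hflip : ∀ j ≤ k, ∀ t ∈ Set.Icc (s j) (s (j + 1)),
      ∀ χ₁ χ₂ : EuclideanSpace ℝ (Fin n), ‖χ₁ - x t‖ ≤ ρ → ‖χ₂ - x t‖ ≤ ρ →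
        ‖f j χ₁ t - f j χ₂ t‖ ≤ L * ‖χ₁ - χ₂‖)
    (y₀ : EuclideanSpace ℝ (Fin n)) (hy₀ : Real.exp (L * T) * ‖x₀ - y₀‖ ≤ ρ) :
    ∃ y : ℝ → EuclideanSpace ℝ (Fin n),
      (∃ Ky : NNReal, LipschitzOnWith Ky y (Set.Icc 0 T)) ∧
      y 0 = y₀ ∧
      (∀ᵐ t ∂(volume.restrict (Set.Icc 0 T)),
        ∀ j ≤ k, t ∈ Set.Ioo (s j) (s (j + 1)) → HasDerivAt y (f j (y t) t) t) ∧
      ∀ t ∈ Set.Icc 0 T, ‖y t - x t‖ ≤ Real.exp (L * t) * ‖y₀ - x₀‖ := by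
  classical
  have hmono : ∀ j, j ≤ k + 1 → ∀ i, i ≤ j → s i ≤ s j := by
    intro j
    induction j with
    | zero => intro _ i hi; rw [Nat.le_zero.mp hi]
    | succ m ih =>
      intro hm i hi
      rcases Nat.lt_succ_iff_lt_or_eq.mp (Nat.lt_succ_of_le hi) with h | h
      · rcases Nat.lt_succ_iff.mp h with h'
        exact (ih (by omega) i h').trans (hs m (by omega)).le
      · rw [h]
  rw [norm_sub_rev] at hy₀
  set z₀ := y₀ - x₀ with hz₀def
  have hbnd : ∀ t ∈ Set.Icc (0:ℝ) T, Real.exp (L * t) * ‖z₀‖ ≤ ρ := by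
    intro t ht
    refine le_trans (mul_le_mul_of_nonneg_right ?_ (norm_nonneg _)) hy₀
    exact Real.exp_le_exp.2 (mul_le_mul_of_nonneg_left ht.2 hL)
  set v : ℕ → ℝ → EuclideanSpace ℝ (Fin n) → EuclideanSpace ℝ (Fin n) :=
    fun j t ζ => f j (stmt2ProjB ρ ζ + x t) t - f j (x t) t with hvdef
  have hsub : ∀ j ≤ k, Set.Icc (s j) (s (j + 1)) ⊆ Set.Icc (0:ℝ) T := by
    intro j hj
    apply Set.Icc_subset_Icc
    · rw [← hs0]; exact hmono j (by omega) 0 (by omega)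
    · rw [← hsT]; exact hmono (k + 1) le_rfl (j + 1) (by omega)
  have hxcont : ContinuousOn x (Set.Icc 0 T) := hxlip.continuousOn
  have hvnorm : ∀ j ≤ k, ∀ t ∈ Set.Icc (s j) (s (j + 1)), ∀ ζ,
      ‖v j t ζ‖ ≤ L * ‖stmt2ProjB ρ ζ‖ := by
    intro j hj t ht ζ
    have h := hflip j hj t ht (stmt2ProjB ρ ζ + x t) (x t)
      (by rw [add_sub_cancel_right]; exact stmt2ProjB_norm_le hρ.le ζ)
      (by simp [hρ.le])
    rw [add_sub_cancel_right] at h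
    simpa only [hvdef] using h
  have hvboundρ : ∀ j ≤ k, ∀ t ∈ Set.Icc (s j) (s (j + 1)), ∀ ζ, ‖v j t ζ‖ ≤ L * ρ :=
    fun j hj t ht ζ => (hvnorm j hj t ht ζ).trans
      (mul_le_mul_of_nonneg_left (stmt2ProjB_norm_le hρ.le ζ) hL)
  have hvboundz : ∀ j ≤ k, ∀ t ∈ Set.Icc (s j) (s (j + 1)), ∀ ζ, ‖v j t ζ‖ ≤ L * ‖ζ‖ :=
    fun j hj t ht ζ => (hvnorm j hj t ht ζ).trans
      (mul_le_mul_of_nonneg_left (stmt2ProjB_norm_le_self hρ.le ζ) hL)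
  have hvlip : ∀ j ≤ k, ∀ t ∈ Set.Icc (s j) (s (j + 1)),
      LipschitzWith (2 * L.toNNReal) (v j t) := by
    intro j hj t ht
    apply LipschitzWith.of_dist_le_mul
    intro ζ₁ ζ₂
    rw [dist_eq_norm, dist_eq_norm]
    have h1 : v j t ζ₁ - v j t ζ₂
        = f j (stmt2ProjB ρ ζ₁ + x t) t - f j (stmt2ProjB ρ ζ₂ + x t) t := by
      simp only [hvdef]; abel
    rw [h1]
    have h2 := hflip j hj t ht (stmt2ProjB ρ ζ₁ + x t) (stmt2ProjB ρ ζ₂ + x t)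
      (by rw [add_sub_cancel_right]; exact stmt2ProjB_norm_le hρ.le ζ₁)
      (by rw [add_sub_cancel_right]; exact stmt2ProjB_norm_le hρ.le ζ₂)
    rw [add_sub_add_right_eq_sub] at h2
    have h3 := stmt2ProjB_lip hρ.le ζ₁ ζ₂
    have hco : ((2 * L.toNNReal : NNReal) : ℝ) = 2 * L := by
      rw [NNReal.coe_mul, Real.coe_toNNReal L hL]; norm_num
    rw [hco]
    nlinarith [norm_nonneg (ζ₁ - ζ₂)]
  have hvcont : ∀ j ≤ k, ∀ ζ, ContinuousOn (fun t => v j t ζ) (Set.Icc (s j) (s (j + 1))) := by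
    intro j hj ζ
    have hx' : ContinuousOn x (Set.Icc (s j) (s (j + 1))) := hxcont.mono (hsub j hj)
    have c1 : ContinuousOn (fun t => f j (stmt2ProjB ρ ζ + x t) t)
        (Set.Icc (s j) (s (j + 1))) := by
      apply (hfcont j hj).comp (ContinuousOn.prodMk (continuousOn_const.add hx') continuousOn_id)
      intro t ht
      refine ⟨ht, ?_⟩
      simp only [id_eq, Pi.add_apply]
      rw [add_sub_cancel_right]
      exact stmt2ProjB_norm_le hρ.le ζ
    have c2 : ContinuousOn (fun t => f j (x t) t) (Set.Icc (s j) (s (j + 1))) := by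
      apply (hfcont j hj).comp (ContinuousOn.prodMk hx' continuousOn_id)
      intro t ht
      exact ⟨ht, by simp [hρ.le]⟩
    simp only [hvdef]
    exact c1.sub c2
  have key : ∀ m, m ≤ k → ∃ w : ℝ → EuclideanSpace ℝ (Fin n),
      w 0 = z₀ ∧
      (∀ j, j ≤ m → ∀ t ∈ Set.Icc (s j) (s (j + 1)),
        HasDerivWithinAt w (v j t (w t)) (Set.Icc (s j) (s (j + 1))) t) ∧
      (∀ t ∈ Set.Icc (0:ℝ) (s (m + 1)), ‖w t‖ ≤ Real.exp (L * t) * ‖z₀‖) ∧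
      LipschitzOnWith (L * ρ).toNNReal w (Set.Icc 0 (s (m + 1))) := by
    intro m
    induction m with
    | zero =>
      intro hm
      obtain ⟨z, hz0, hzD⟩ := stmt2_exists_sol (v 0) (s 0) (s 1) (hs 0 hm).le (2 * L.toNNReal)
        (L * ρ) (mul_nonneg hL hρ.le) (hvlip 0 hm) (hvcont 0 hm)
        (fun t ht ζ => hvboundρ 0 hm t ht ζ) z₀
      refine ⟨z, by rw [← hs0]; exact hz0, ?_, ?_, ?_⟩
      · intro j hj t ht
        obtain rfl : j = 0 := Nat.le_zero.mp hj
        exact hzD t ht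
      · have hg := stmt2_gron hzD (fun t ht => hvboundz 0 hm t ht (z t)) (le_of_eq (by rw [hz0]))
        intro t ht
        have h := hg t (by rwa [hs0])
        calc ‖z t‖ ≤ ‖z₀‖ * Real.exp (L * (t - s 0)) := h
          _ = Real.exp (L * t) * ‖z₀‖ := by rw [hs0, sub_zero, mul_comm]
      · have := stmt2_lipOn_of_deriv (mul_nonneg hL hρ.le) hzD
          (fun t ht => hvboundρ 0 hm t ht (z t))
        rwa [hs0] at this
    | succ m ih =>
      intro hm
      obtain ⟨w, hw0, hwD, hwN, hwL⟩ := ih (by omega)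
      obtain ⟨z, hza, hzD⟩ := stmt2_exists_sol (v (m + 1)) (s (m + 1)) (s (m + 1 + 1))
        (hs (m + 1) hm).le (2 * L.toNNReal) (L * ρ) (mul_nonneg hL hρ.le)
        (hvlip (m + 1) hm) (hvcont (m + 1) hm)
        (fun t ht ζ => hvboundρ (m + 1) hm t ht ζ) (w (s (m + 1)))
      set w' := fun t => if t ≤ s (m + 1) then w t else z t with hw'def
      have h0a : (0:ℝ) ≤ s (m + 1) := by
        rw [← hs0]; exact hmono (m + 1) (by omega) 0 (by omega)
      have hab : s (m + 1) ≤ s (m + 1 + 1) := (hs (m + 1) hm).le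
      have hw'w : ∀ t ∈ Set.Icc (0:ℝ) (s (m + 1)), w' t = w t := fun t ht => if_pos ht.2
      have hw'z : ∀ t ∈ Set.Icc (s (m + 1)) (s (m + 1 + 1)), w' t = z t := by
        intro t ht
        by_cases h : t ≤ s (m + 1)
        · have heq : t = s (m + 1) := le_antisymm h ht.1
          show (if t ≤ s (m + 1) then w t else z t) = z t
          rw [if_pos h, heq, hza]
        · simp only [hw'def, if_neg h]
      have hzN : ∀ t ∈ Set.Icc (s (m + 1)) (s (m + 1 + 1)), ‖z t‖ ≤ Real.exp (L * t) * ‖z₀‖ := by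
        have h0 : ‖z (s (m + 1))‖ ≤ Real.exp (L * s (m + 1)) * ‖z₀‖ := by
          rw [hza]; exact hwN (s (m + 1)) ⟨h0a, le_rfl⟩
        intro t ht
        have h := stmt2_gron hzD (fun u hu => hvboundz (m + 1) hm u hu (z u)) h0 t ht
        calc ‖z t‖ ≤ Real.exp (L * s (m + 1)) * ‖z₀‖ * Real.exp (L * (t - s (m + 1))) := h
          _ = Real.exp (L * t) * ‖z₀‖ := by
            rw [mul_right_comm, ← Real.exp_add]; ring_nf
      refine ⟨w', ?_, ?_, ?_, ?_⟩
      · rw [hw'w 0 ⟨le_rfl, h0a⟩, hw0]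
      · intro j hj t ht
        by_cases hjm : j ≤ m
        · have hset : ∀ u ∈ Set.Icc (s j) (s (j + 1)), w' u = w u := by
            intro u hu
            apply hw'w
            constructor
            · refine le_trans ?_ hu.1
              rw [← hs0]; exact hmono j (by omega) 0 (by omega)
            · exact le_trans hu.2 (hmono (m + 1) (by omega) (j + 1) (by omega))
          rw [hset t ht]
          exact (hwD j hjm t ht).congr hset (hset t ht)
        · have hj' : j = m + 1 := by omega
          subst hj'
          rw [hw'z t ht]
          exact (hzD t ht).congr (fun u hu => hw'z u hu) (hw'z t ht)
      · intro t ht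
        by_cases h : t ≤ s (m + 1)
        · rw [hw'w t ⟨ht.1, h⟩]; exact hwN t ⟨ht.1, h⟩
        · have ht' : t ∈ Set.Icc (s (m + 1)) (s (m + 1 + 1)) := ⟨(not_le.mp h).le, ht.2⟩
          rw [hw'z t ht']; exact hzN t ht'
      · apply stmt2_lipOn_glue h0a hab
        · exact stmt2_lipOn_congr hwL hw'w
        · exact stmt2_lipOn_congr (stmt2_lipOn_of_deriv (mul_nonneg hL hρ.le) hzD
            (fun u hu => hvboundρ (m + 1) hm u hu (z u))) hw'z
  obtain ⟨w, hw0, hwD, hwN, hwL⟩ := key k le_rfl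
  rw [hsT] at hwN hwL
  refine ⟨fun t => x t + w t, ⟨Kx + (L * ρ).toNNReal, stmt2_lipOn_add hxlip hwL⟩, ?_, ?_, ?_⟩
  · show x 0 + w 0 = y₀
    rw [hx0, hw0, hz₀def]; abel
  · filter_upwards [hxode, ae_restrict_mem measurableSet_Icc] with t hxt htIcc
    intro j hj htIoo
    have htcc := Set.Ioo_subset_Icc_self htIoo
    have hd_w : HasDerivAt w (v j t (w t)) t :=
      (hwD j hj t htcc).hasDerivAt (Icc_mem_nhds htIoo.1 htIoo.2)
    have hd_x : HasDerivAt x (f j (x t) t) t := hxt j hj htIoo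
    have hp : stmt2ProjB ρ (w t) = w t :=
      stmt2ProjB_eq (le_trans (hwN t htIcc) (hbnd t htIcc))
    have hval : f j (x t) t + v j t (w t) = f j (x t + w t) t := by
      simp only [hvdef, hp]
      rw [add_comm (w t) (x t)]
      abel
    show HasDerivAt (fun t => x t + w t) (f j (x t + w t) t) t
    rw [← hval]
    exact hd_x.add hd_w
  · intro t ht
    show ‖x t + w t - x t‖ ≤ Real.exp (L * t) * ‖z₀‖
    have heq : x t + w t - x t = w t := by abel
    rw [heq]
    exact hwN t ht
end

section
/- Let F : ℝⁿ × [t₀, T] → ℝⁿ be continuously differentiable in its first argument, and suppose there exist ρ > 0, a ≥ 0, and L ≥ 0 such that for all t ∈ [t₀, T] and all χ with ‖χ − x(t)‖ ≤ ρ one has ‖∇_χF(χ, t)‖ ≤ a, and ∇_χF(·, t) is Lipschitz in χ with constant L on this tube. Suppose x, y : [t₀, T] → ℝⁿ satisfy ẋ(t) = F(x(t), t) and ẏ(t) = F(y(t), t) with ‖y(t) − x(t)‖ ≤ ε ≤ ρ for all t ∈ [t₀, T], and suppose z : [t₀, T] → ℝⁿ solves the variational equation ż(t) = ∇_χF(x(t),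 t)·z(t) with ‖z(t)‖ ≤ M for all t ∈ [t₀, T]. Then the linearization error δ(t) = y(t) − x(t) − z(t) satisfies ‖δ(t)‖ ≤ e^{a(t − t₀)}·( ‖δ(t₀)‖ + (L·ε·M/2)·(t − t₀) ) for all t ∈ [t₀, T]. -/
open Set

variable {n : ℕ}

local notation "E" => EuclideanSpace ℝ (Fin n)

private lemma gronwall_aux {a c τ δ₀ : ℝ} (ha : 0 ≤ a) (hc : 0 ≤ c) (hτ : 0 ≤ τ) :
    gronwallBound δ₀ a c τ ≤ Real.exp (a * τ) * (δ₀ + c * τ) := by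
  rcases eq_or_lt_of_le ha with h0 | hapos
  · rw [← h0, gronwallBound_K0]
    simp
  · rw [gronwallBound_of_K_ne_0 hapos.ne']
    have h1 := Real.add_one_le_exp (-(a * τ))
    have h2 : Real.exp (-(a * τ)) * Real.exp (a * τ) = 1 := by
      rw [← Real.exp_add]; simp
    have h3 := Real.exp_pos (a * τ)
    have key : c / a * (Real.exp (a * τ) - 1) ≤ c * τ * Real.exp (a * τ) := by
      rw [div_mul_eq_mul_div, div_le_iff₀ hapos]
      have h4 : Real.exp (a * τ) - a * τ * Real.exp (a * τ) ≤ 1 := by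
        nlinarith [mul_le_mul_of_nonneg_right h1 h3.le]
      have h5 : Real.exp (a * τ) - 1 ≤ a * τ * Real.exp (a * τ) := by linarith
      nlinarith [mul_le_mul_of_nonneg_left h5 hc]
    nlinarith

set_option maxHeartbeats 1000000 in
set_option synthInstance.maxHeartbeats 400000 in
/-- Linearization error bound: if `ẋ = F(x, t)`, `ẏ = F(y, t)` with
`‖y − x‖ ≤ ε ≤ ρ` on `[t₀, T]`, the Jacobian `∇_χF` is bounded by `a` and `L`-Lipschitz in
`χ` on the `ρ`-tube around `x`, and `z` solves the variational equation
`ż = ∇_χF(x(t), t)z` with `‖z‖ ≤ M`, then the linearization error `δ = y − x − z` satisfies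
`‖δ(t)‖ ≤ e^{a(t−t₀)}(‖δ(t₀)‖ + (LεM/2)(t − t₀))`. -/
theorem stmt_5 (t₀ T ρ a L ε M : ℝ)
    (hρ : 0 < ρ) (ha : 0 ≤ a) (hL : 0 ≤ L) (hε : 0 ≤ ε) (hερ : ε ≤ ρ) (hM : 0 ≤ M)
    (F : E → ℝ → E) (x y z : ℝ → E)
    (hdiff : ∀ t ∈ Icc t₀ T, ∀ χ : E, ‖χ - x t‖ ≤ ρ →
      DifferentiableAt ℝ (fun χ' => F χ' t) χ)
    (hbound : ∀ t ∈ Icc t₀ T, ∀ χ : E, ‖χ - x t‖ ≤ ρ →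
      ‖fderiv ℝ (fun χ' => F χ' t) χ‖ ≤ a)
    (hlipD : ∀ t ∈ Icc t₀ T, ∀ χ₁ χ₂ : E, ‖χ₁ - x t‖ ≤ ρ → ‖χ₂ - x t‖ ≤ ρ →
      ‖fderiv ℝ (fun χ' => F χ' t) χ₁ - fderiv ℝ (fun χ' => F χ' t) χ₂‖ ≤ L * ‖χ₁ - χ₂‖)
    (hx : ∀ t ∈ Icc t₀ T, HasDerivAt x (F (x t) t) t)
    (hy : ∀ t ∈ Icc t₀ T, HasDerivAt y (F (y t) t) t)
    (hxy : ∀ t ∈ Icc t₀ T, ‖y t - x t‖ ≤ ε)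
    (hz : ∀ t ∈ Icc t₀ T, HasDerivAt z (fderiv ℝ (fun χ' => F χ' t) (x t) (z t)) t)
    (hzM : ∀ t ∈ Icc t₀ T, ‖z t‖ ≤ M) :
    ∀ t ∈ Icc t₀ T, ‖y t - x t - z t‖ ≤
      Real.exp (a * (t - t₀)) * (‖y t₀ - x t₀ - z t₀‖ + (L * ε * M / 2) * (t - t₀)) := by
  set c : ℝ := L * ε * M / 2 with hc
  -- Key pointwise bound on the derivative of the error
  have key : ∀ t ∈ Icc t₀ T,
      ‖F (y t) t - F (x t) t - fderiv ℝ (fun χ' => F χ' t) (x t) (z t)‖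
        ≤ a * ‖y t - x t - z t‖ + c := by
    intro t ht
    set A := fderiv ℝ (fun χ' => F χ' t) (x t) with hA
    set v := y t - x t with hv
    set w := z t with hw
    have hvε : ‖v‖ ≤ ε := hxy t ht
    have hwM : ‖w‖ ≤ M := hzM t ht
    set h : ℝ → E := fun s => F (x t + s • v) t - s • A w with hh
    have htube : ∀ s ∈ Icc (0:ℝ) 1, ‖(x t + s • v) - x t‖ ≤ ρ := by
      intro s hs
      rw [add_sub_cancel_left, norm_smul, Real.norm_eq_abs, abs_of_nonneg hs.1]
      calc s * ‖v‖ ≤ 1 * ε := mul_le_mul hs.2 hvε (norm_nonneg _) zero_le_one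
        _ ≤ ρ := by linarith
    have hder : ∀ s ∈ Icc (0:ℝ) 1, HasDerivAt h
        ((fderiv ℝ (fun χ' => F χ' t) (x t + s • v)) v - A w) s := by
      intro s hs
      have hp : HasDerivAt (fun s : ℝ => x t + s • v) v s := by
        simpa using ((hasDerivAt_id s).smul_const v).const_add (x t)
      have hd := hdiff t ht (x t + s • v) (htube s hs)
      have h1 : HasDerivAt (fun s : ℝ => F (x t + s • v) t)
          ((fderiv ℝ (fun χ' => F χ' t) (x t + s • v)) v) s :=
        by have := hd.hasFDerivAt.comp_hasDerivAt s hp; exact this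
      have h2 : HasDerivAt (fun s : ℝ => s • A w) (A w) s := by
        simpa using (hasDerivAt_id s).smul_const (A w)
      exact h1.sub h2
    set B : ℝ → ℝ := fun s => a * ‖v - w‖ * s + L * ε * M * s ^ 2 / 2 with hB
    have hB' : ∀ s : ℝ, HasDerivAt B (a * ‖v - w‖ + L * ε * M * s) s := by
      intro s
      have h1 : HasDerivAt (fun s : ℝ => a * ‖v - w‖ * s) (a * ‖v - w‖) s := by
        simpa using (hasDerivAt_id s).const_mul (a * ‖v - w‖)
      have h2 : HasDerivAt (fun s : ℝ => L * ε * M * s ^ 2 / 2) (L * ε * M * s) s := by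
        have := ((hasDerivAt_pow 2 s).const_mul (L * ε * M)).div_const 2
        exact this.congr_deriv (by ring)
      exact h1.add h2
    have bound : ∀ s ∈ Ico (0:ℝ) 1,
        ‖(fderiv ℝ (fun χ' => F χ' t) (x t + s • v)) v - A w‖
          ≤ a * ‖v - w‖ + L * ε * M * s := by
      intro s hs
      set Bs := fderiv ℝ (fun χ' => F χ' t) (x t + s • v) with hBs
      have hsplit : Bs v - A w = Bs (v - w) + (Bs - A) w := by
        simp only [map_sub, ContinuousLinearMap.sub_apply]
        abel
      rw [hsplit]
      have hBsa : ‖Bs‖ ≤ a := hbound t ht _ (htube s ⟨hs.1, hs.2.le⟩)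
      have hlip : ‖Bs - A‖ ≤ L * (s * ‖v‖) := by
        have := hlipD t ht (x t + s • v) (x t) (htube s ⟨hs.1, hs.2.le⟩)
          (by simpa using hρ.le)
        simpa [add_sub_cancel_left, norm_smul, Real.norm_eq_abs, abs_of_nonneg hs.1] using this
      calc ‖Bs (v - w) + (Bs - A) w‖ ≤ ‖Bs (v - w)‖ + ‖(Bs - A) w‖ := norm_add_le _ _
        _ ≤ ‖Bs‖ * ‖v - w‖ + ‖Bs - A‖ * ‖w‖ :=
            add_le_add (ContinuousLinearMap.le_opNorm _ _) (ContinuousLinearMap.le_opNorm _ _)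
        _ ≤ a * ‖v - w‖ + (L * (s * ‖v‖)) * M :=
            add_le_add (mul_le_mul_of_nonneg_right hBsa (norm_nonneg _))
              (mul_le_mul hlip hwM (norm_nonneg _)
                (mul_nonneg hL (mul_nonneg hs.1 (norm_nonneg _))))
        _ ≤ a * ‖v - w‖ + L * ε * M * s := by
            have h5 : L * s * M * ‖v‖ ≤ L * s * M * ε :=
              mul_le_mul_of_nonneg_left hvε (mul_nonneg (mul_nonneg hL hs.1) hM)
            nlinarith [h5]
    have main : ‖h 1 - h 0‖ ≤ B 1 := by
      refine image_norm_le_of_norm_deriv_right_le_deriv_boundary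
        (f := fun s => h s - h 0)
        (f' := fun s => (fderiv ℝ (fun χ' => F χ' t) (x t + s • v)) v - A w)
        (fun s hs => ((hder s hs).sub_const (h 0)).continuousAt.continuousWithinAt)
        (fun s hs => ((hder s ⟨hs.1, hs.2.le⟩).sub_const (h 0)).hasDerivWithinAt)
        ?_ hB' bound (right_mem_Icc.2 zero_le_one)
      simp [hB]
    have h1v : h 1 = F (y t) t - A w := by
      have e : x t + v = y t := by rw [hv]; abel
      simp only [hh, one_smul, e]
    have h0v : h 0 = F (x t) t := by simp [hh]
    have hB1 : B 1 = a * ‖v - w‖ + c := by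
      show a * ‖v - w‖ * 1 + L * ε * M * 1 ^ 2 / 2 = a * ‖v - w‖ + c
      rw [hc]; ring
    have heq : F (y t) t - F (x t) t - A w = h 1 - h 0 := by
      rw [h1v, h0v]; abel
    rw [hB1] at main
    rw [heq]
    exact main
  -- Grönwall
  have hcont : ContinuousOn (fun t => y t - x t - z t) (Icc t₀ T) := fun t ht =>
    (((hy t ht).sub (hx t ht)).sub (hz t ht)).continuousAt.continuousWithinAt
  have hder : ∀ t ∈ Ico t₀ T, HasDerivWithinAt (fun t => y t - x t - z t)
      (F (y t) t - F (x t) t - fderiv ℝ (fun χ' => F χ' t) (x t) (z t)) (Ici t) t := by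
    intro t ht
    have ht' : t ∈ Icc t₀ T := ⟨ht.1, ht.2.le⟩
    exact (((hy t ht').sub (hx t ht')).sub (hz t ht')).hasDerivWithinAt
  have hg := norm_le_gronwallBound_of_norm_deriv_right_le hcont hder le_rfl
    (fun t ht => key t ⟨ht.1, ht.2.le⟩)
  intro t ht
  calc ‖y t - x t - z t‖ ≤ gronwallBound ‖y t₀ - x t₀ - z t₀‖ a c (t - t₀) := hg t ht
    _ ≤ Real.exp (a * (t - t₀)) * (‖y t₀ - x t₀ - z t₀‖ + c * (t - t₀)) :=
        gronwall_aux ha (by positivity) (by linarith [ht.1])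
end

section
/- Let k₁, k₂, k₃ ∈ ℝ and let a, b, p₁, p₂, u : I → ℝ be differentiable functions on an interval I satisfying ȧ(t) = −u(t)·(k₁a(t) − k₂b(t)), ḃ(t) = u(t)·(k₁a(t) − k₂b(t)) − (1 − u(t))·k₃·b(t), ṗ₁(t) = −(p₂(t) − p₁(t))·k₁·u(t), and ṗ₂(t) = (p₂(t) − p₁(t))·k₂·u(t) + k₃·(1 − u(t))·p₂(t) for all t ∈ I. Define the switching function 𝒮(t) = (p₂(t) − p₁(t))·(k₁a(t) − k₂b(t)) + k₃·p₂(t)·b(t). Then 𝒮 is differentiable on I and 𝒮̇(t) = k₃·(k₁·a(t)·p₂(t) − k₂·b(t)·p₁(t)) for all t ∈ I. -/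
/-- In the catalyst mixing problem, along any solution of the state and
costate dynamics, the switching function
`𝒮(t) = (p₂(t) − p₁(t))(k₁a(t) − k₂b(t)) + k₃p₂(t)b(t)` is differentiable with
`𝒮̇(t) = k₃(k₁a(t)p₂(t) − k₂b(t)p₁(t))`. -/
theorem stmt_13 (k₁ k₂ k₃ : ℝ) (I : Set ℝ) (a b p₁ p₂ u : ℝ → ℝ)
    (ha : ∀ t ∈ I, HasDerivAt a (-(u t) * (k₁ * a t - k₂ * b t)) t)
    (hb : ∀ t ∈ I, HasDerivAt b
      (u t * (k₁ * a t - k₂ * b t) - (1 - u t) * k₃ * b t) t)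
    (hp₁ : ∀ t ∈ I, HasDerivAt p₁ (-(p₂ t - p₁ t) * k₁ * u t) t)
    (hp₂ : ∀ t ∈ I, HasDerivAt p₂
      ((p₂ t - p₁ t) * k₂ * u t + k₃ * (1 - u t) * p₂ t) t) :
    ∀ t ∈ I, HasDerivAt
      (fun τ => (p₂ τ - p₁ τ) * (k₁ * a τ - k₂ * b τ) + k₃ * p₂ τ * b τ)
      (k₃ * (k₁ * a t * p₂ t - k₂ * b t * p₁ t)) t := by
  intro t ht
  have Ha := ha t ht
  have Hb := hb t ht
  have Hp₁ := hp₁ t ht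
  have Hp₂ := hp₂ t ht
  have H := (((Hp₂.sub Hp₁).mul ((Ha.const_mul k₁).sub (Hb.const_mul k₂))).add
    (((Hp₂.const_mul k₃)).mul Hb))
  convert H using 1
  · rfl
  · rfl
  · rfl
  · simp only [Pi.sub_apply]
    ring
end

section
/- Let k₁, k₂, k₃ ∈ ℝ and let a, b, p₁, p₂, u : I → ℝ be differentiable functions on an interval I satisfying ȧ(t) = −u(t)·(k₁a(t) − k₂b(t)), ḃ(t) = u(t)·(k₁a(t) − k₂b(t)) − (1 − u(t))·k₃·b(t), ṗ₁(t) = −(p₂(t) − p₁(t))·k₁·u(t), and ṗ₂(t) = (p₂(t) − p₁(t))·k₂·u(t) + k₃·(1 − u(t))·p₂(t) for all t ∈ I. Then the function t ↦ k₃·(k₁·a(t)·p₂(t) − k₂·b(t)·p₁(t)) is differentiable on I with derivative k₃·{ u(t)·p₁(t)·[k₂·b(t)·(k₂ − k₃ − k₁) − 2k₁k₂·a(t)] + u(t)·p₂(t)·[k₁·a(t)·(k₂ − k₃ − k₁) + 2k₁k₂·b(t)] + k₃·[k₁·p₂(t)·a(t) + k₂·p₁(t)·b(t)] } for all t ∈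 I. -/
/-- In the catalyst mixing problem, the first derivative
`𝒮̇(t) = k₃(k₁a(t)p₂(t) − k₂b(t)p₁(t))` of the switching function is differentiable,
with derivative `𝒮̈` given by the stated expression (which contains `u` explicitly). -/
theorem stmt_14 (k₁ k₂ k₃ : ℝ) (I : Set ℝ) (a b p₁ p₂ u : ℝ → ℝ)
    (ha : ∀ t ∈ I, HasDerivAt a (-(u t) * (k₁ * a t - k₂ * b t)) t)
    (hb : ∀ t ∈ I, HasDerivAt b
      (u t * (k₁ * a t - k₂ * b t) - (1 - u t) * k₃ * b t) t)
    (hp₁ : ∀ t ∈ I, HasDerivAt p₁ (-(p₂ t - p₁ t) * k₁ * u t) t)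
    (hp₂ : ∀ t ∈ I, HasDerivAt p₂
      ((p₂ t - p₁ t) * k₂ * u t + k₃ * (1 - u t) * p₂ t) t) :
    ∀ t ∈ I, HasDerivAt
      (fun τ => k₃ * (k₁ * a τ * p₂ τ - k₂ * b τ * p₁ τ))
      (k₃ * (u t * p₁ t * (k₂ * b t * (k₂ - k₃ - k₁) - 2 * k₁ * k₂ * a t) +
             u t * p₂ t * (k₁ * a t * (k₂ - k₃ - k₁) + 2 * k₁ * k₂ * b t) +
             k₃ * (k₁ * p₂ t * a t + k₂ * p₁ t * b t))) t := by
  intro t ht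
  have h := ((((ha t ht).const_mul k₁).mul (hp₂ t ht)).sub
    (((hb t ht).const_mul k₂).mul (hp₁ t ht))).const_mul k₃
  refine h.congr_deriv ?_
  ring
end

section
/- Let x₁, x₂, p₁, p₂, u : I → ℝ be functions on a nontrivial interval I with x₁, x₂, p₁, p₂ differentiable and satisfying ẋ₁(t) = u(t), ẋ₂(t) = −x₁(t), ṗ₁(t) = p₂(t) − 2x₁(t), ṗ₂(t) = 1 for all t ∈ I. If the switching function 𝒮(t) = p₁(t) vanishes identically on I, then u(t) = 1/2 for all t ∈ I. -/
lemma aux_zero_deriv (I : Set ℝ) (hconv : Convex ℝ I)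
    (hint : (interior I).Nonempty)
    (f : ℝ → ℝ) (hf0 : ∀ t ∈ I, f t = 0)
    {t : ℝ} (ht : t ∈ I) {d : ℝ} (hd : HasDerivAt f d t) : d = 0 := by
  have hU : UniqueDiffWithinAt ℝ I t :=
    uniqueDiffWithinAt_convex hconv hint (subset_closure ht)
  have h1 : HasDerivWithinAt f d I t := hd.hasDerivWithinAt
  have h2 : HasDerivWithinAt f 0 I t :=
    (hasDerivWithinAt_const t I (0 : ℝ)).congr (fun y hy => hf0 y hy) (hf0 t ht)
  have := h1.derivWithin hU
  rw [← this, h2.derivWithin hU]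

/-- Singular-arc relation for Bressan's problem: if on a nontrivial
interval `I` the dynamics `ẋ₁ = u`, `ẋ₂ = −x₁`, `ṗ₁ = p₂ − 2x₁`, `ṗ₂ = 1` hold and the
switching function `𝒮 = p₁` vanishes identically on `I`, then `u = 1/2` on `I`. -/
theorem stmt_16 (I : Set ℝ) (hI : I.OrdConnected)
    (hnt : ∃ t₁ ∈ I, ∃ t₂ ∈ I, t₁ ≠ t₂)
    (x₁ x₂ p₁ p₂ u : ℝ → ℝ)
    (hx₁ : ∀ t ∈ I, HasDerivAt x₁ (u t) t)
    (hx₂ : ∀ t ∈ I, HasDerivAt x₂ (-(x₁ t)) t)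
    (hp₁ : ∀ t ∈ I, HasDerivAt p₁ (p₂ t - 2 * x₁ t) t)
    (hp₂ : ∀ t ∈ I, HasDerivAt p₂ 1 t)
    (hS : ∀ t ∈ I, p₁ t = 0) :
    ∀ t ∈ I, u t = 1 / 2 := by
  have hconv : Convex ℝ I := hI.convex
  obtain ⟨t₁, ht₁, t₂, ht₂, hne⟩ := hnt
  have hint : (interior I).Nonempty := by
    rcases lt_or_gt_of_ne hne with h | h
    · exact ⟨(t₁ + t₂) / 2, interior_mono (hI.out ht₁ ht₂)
        (by rw [interior_Icc]; exact ⟨by linarith, by linarith⟩)⟩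
    · exact ⟨(t₁ + t₂) / 2, interior_mono (hI.out ht₂ ht₁)
        (by rw [interior_Icc]; exact ⟨by linarith, by linarith⟩)⟩
  -- Step 1: p₂ - 2x₁ = 0 on I
  have hq0 : ∀ t ∈ I, p₂ t - 2 * x₁ t = 0 := by
    intro t ht
    exact aux_zero_deriv I hconv hint p₁ hS ht (hp₁ t ht)
  -- Step 2: derivative of q := p₂ - 2x₁ is 1 - 2u, and it's 0 on I
  intro t ht
  have hq : ∀ s ∈ I, HasDerivAt (fun s => p₂ s - 2 * x₁ s) (1 - 2 * u s) s := by
    intro s hs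
    exact (hp₂ s hs).sub ((hx₁ s hs).const_mul 2)
  have := aux_zero_deriv I hconv hint (fun s => p₂ s - 2 * x₁ s) hq0 ht (hq t ht)
  linarith
end
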